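/- Let Φ : ℝ^N → ℝ satisfy (λ|A| − 1)₊ ≤ Φ(A) ≤ Λ|A| + 1 for all A ∈ ℝ^N, where 0 < λ ≤ Λ. Assume Φ is differentiable on ℝ^N with q := ∇Φ satisfying |q(A)| ≤ Λ for all A, and that the convexification Φ** is differentiable on ℝ^N. Let ν be a Borel probability measure on ℝ^N concentrated on the contact set B := {A ∈ ℝ^N : Φ**(A) = Φ(A)} (i.e. ν(ℝ^N ∖ B) = 0) and with finite first moment ∫ |A| dν(A) < ∞. Then ∫ q(A) · A dν(A) ≥ (∫ q(A) dν(A)) · (∫ A dν(A)). -/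

import Mathlib

open MeasureTheory Set

section Aux

variable {E : Type*} [NormedAddCommGroup E] [InnerProductSpace ℝ E] [CompleteSpace E]

/-- Gradient inequality for convex functions. -/
lemma convex_grad_ineq {f : E → ℝ} (hf : ConvexOn ℝ Set.univ f)
    {x g : E} (hg : HasGradientAt f g x) (y : E) :
    f x + (inner ℝ g (y - x) : ℝ) ≤ f y := by
  set φ : ℝ → ℝ := fun t => f (x + t • (y - x)) with hφ
  have hφconv : ConvexOn ℝ Set.univ φ := by
    have := hf.comp_affineMap (AffineMap.lineMap x y)
    have h1 : (AffineMap.lineMap x y : ℝ → E) ⁻¹' Set.univ = Set.univ := preimage_univ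
    rw [h1] at this
    exact this.congr (fun t _ => by simp [φ, AffineMap.lineMap_apply, add_comm, vsub_eq_sub])
  have hcurve : HasDerivAt (fun t : ℝ => x + t • (y - x)) (y - x) (0 : ℝ) := by
    simpa using ((hasDerivAt_id (0:ℝ)).smul_const (y - x)).const_add x
  have hφd : HasDerivAt φ (inner ℝ g (y - x) : ℝ) 0 := by
    have hx : x = x + (0:ℝ) • (y - x) := by simp
    rw [hx] at hg
    have := (hg.hasFDerivAt.comp_hasDerivAt 0 hcurve)
    exact this
  have := hφconv.le_slope_of_hasDerivAt (mem_univ (0:ℝ)) (mem_univ (1:ℝ)) one_pos hφd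
  rw [slope_def_field] at this
  have h0 : φ 0 = f x := by simp [φ]
  have h1 : φ 1 = f y := by simp [φ]
  rw [h0, h1] at this
  simp only [sub_zero, div_one] at this
  linarith

end Aux

/-- The convex envelope (convexification) `Φ**` of `Φ`: the pointwise supremum
of all convex functions lying below `Φ`. -/
noncomputable def convexEnvelope {N : ℕ}
    (Φ : EuclideanSpace ℝ (Fin N) → ℝ) (A : EuclideanSpace ℝ (Fin N)) : ℝ :=
  sSup {y : ℝ | ∃ g : EuclideanSpace ℝ (Fin N) → ℝ,
    ConvexOn ℝ Set.univ g ∧ (∀ z, g z ≤ Φ z) ∧ y = g A}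

/-- **Independence inequality.** For a probability measure `ν` concentrated on
the contact set `B = {Φ** = Φ}` with finite first moment,
`∫ q(A)·A dν ≥ (∫ q dν) · (∫ A dν)`, where `q = ∇Φ`. -/
theorem integral_inner_ge_inner_integrals {N : ℕ} (lam Lam : ℝ)
    (hlam : 0 < lam) (hlL : lam ≤ Lam)
    (Φ : EuclideanSpace ℝ (Fin N) → ℝ)
    (hlow : ∀ A, max (lam * ‖A‖ - 1) 0 ≤ Φ A)
    (hup : ∀ A, Φ A ≤ Lam * ‖A‖ + 1)
    (q p : EuclideanSpace ℝ (Fin N) → EuclideanSpace ℝ (Fin N))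
    (hq : ∀ x, HasGradientAt Φ (q x) x)
    (hqb : ∀ A, ‖q A‖ ≤ Lam)
    (hp : ∀ x, HasGradientAt (convexEnvelope Φ) (p x) x)
    (ν : Measure (EuclideanSpace ℝ (Fin N))) [IsProbabilityMeasure ν]
    (hconc : ν {A : EuclideanSpace ℝ (Fin N) | convexEnvelope Φ A = Φ A}ᶜ = 0)
    (hmom : Integrable (fun A : EuclideanSpace ℝ (Fin N) => ‖A‖) ν) :
    (inner ℝ (∫ A, q A ∂ν) (∫ A, A ∂ν) : ℝ) ≤
      ∫ A, (inner ℝ (q A) A : ℝ) ∂ν := by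
  set env := convexEnvelope Φ with henv
  set S : EuclideanSpace ℝ (Fin N) → Set ℝ := fun A => {y : ℝ | ∃ g : EuclideanSpace ℝ (Fin N) → ℝ,
    ConvexOn ℝ Set.univ g ∧ (∀ z, g z ≤ Φ z) ∧ y = g A} with hS
  -- the set is nonempty and bounded above
  have hg0 : ConvexOn ℝ Set.univ (fun z : EuclideanSpace ℝ (Fin N) => lam * ‖z‖ - 1) := by
    have h1 : ConvexOn ℝ Set.univ (fun z : EuclideanSpace ℝ (Fin N) => ‖z‖) := convexOn_norm convex_univ
    have h2 := h1.smul hlam.le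
    exact (h2.add_const (-1)).congr (fun z _ => by simp [sub_eq_add_neg, smul_eq_mul])
  have hg0le : ∀ z : EuclideanSpace ℝ (Fin N), lam * ‖z‖ - 1 ≤ Φ z := fun z =>
    le_trans (le_max_left _ _) (hlow z)
  have hne : ∀ A : EuclideanSpace ℝ (Fin N), (S A).Nonempty := fun A =>
    ⟨lam * ‖A‖ - 1, fun z => lam * ‖z‖ - 1, hg0, hg0le, rfl⟩
  have hbdd : ∀ A : EuclideanSpace ℝ (Fin N), BddAbove (S A) := fun A =>
    ⟨Φ A, by rintro y ⟨g, hgc, hgle, rfl⟩; exact hgle A⟩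
  have h_le_env : ∀ (g : EuclideanSpace ℝ (Fin N) → ℝ), ConvexOn ℝ Set.univ g → (∀ z, g z ≤ Φ z) →
      ∀ A : EuclideanSpace ℝ (Fin N), g A ≤ env A := fun g hgc hgle A =>
    le_csSup (hbdd A) ⟨g, hgc, hgle, rfl⟩
  have h_env_le : ∀ A : EuclideanSpace ℝ (Fin N), env A ≤ Φ A := fun A =>
    csSup_le (hne A) (by rintro y ⟨g, hgc, hgle, rfl⟩; exact hgle A)
  -- convexity of the envelope
  have henvconv : ConvexOn ℝ Set.univ env := by
    refine ⟨convex_univ, fun x _ y _ a b ha hb hab => ?_⟩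
    refine csSup_le (hne _) ?_
    rintro z ⟨g, hgc, hgle, rfl⟩
    calc g (a • x + b • y) ≤ a • g x + b • g y :=
          hgc.2 (mem_univ x) (mem_univ y) ha hb hab
      _ ≤ a • env x + b • env y :=
          add_le_add (smul_le_smul_of_nonneg_left (h_le_env g hgc hgle x) ha)
            (smul_le_smul_of_nonneg_left (h_le_env g hgc hgle y) hb)
  -- on the contact set, the gradients agree
  have hqp : ∀ A : EuclideanSpace ℝ (Fin N), env A = Φ A → q A = p A := by
    intro A hA
    have hgrad : HasGradientAt (fun z => Φ z - env z) (q A - p A) A := by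
      have := (hq A).hasFDerivAt.sub (hp A).hasFDerivAt
      rw [hasGradientAt_iff_hasFDerivAt, map_sub]
      exact this
    have hmin : IsLocalMin (fun z => Φ z - env z) A := by
      apply Filter.Eventually.of_forall
      intro z
      have : env z ≤ Φ z := h_env_le z
      simp only [hA]
      linarith [h_env_le z]
    have h0 := hmin.hasFDerivAt_eq_zero hgrad.hasFDerivAt
    have : q A - p A = 0 := by
      have := congrArg (InnerProductSpace.toDual ℝ (EuclideanSpace ℝ (Fin N))).symm h0
      simpa using this
    exact sub_eq_zero.mp this
  set m : EuclideanSpace ℝ (Fin N) := ∫ A, A ∂ν with hm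
  -- integrability facts
  have hAmeas : AEStronglyMeasurable (fun A : EuclideanSpace ℝ (Fin N) => A) ν :=
    aestronglyMeasurable_id
  have hA_int : Integrable (fun A : EuclideanSpace ℝ (Fin N) => A) ν :=
    (integrable_norm_iff hAmeas).mp hmom
  have hqfun : q = fun x =>
      (InnerProductSpace.toDual ℝ (EuclideanSpace ℝ (Fin N))).symm (fderiv ℝ Φ x) := by
    funext x
    rw [(hq x).hasFDerivAt.fderiv]
    simp
  have hqmeas : AEStronglyMeasurable q ν := by
    rw [hqfun]
    exact ((InnerProductSpace.toDual ℝ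
      (EuclideanSpace ℝ (Fin N))).symm.continuous.measurable.comp
      (measurable_fderiv ℝ Φ)).aestronglyMeasurable
  have hq_int : Integrable q ν :=
    Integrable.mono' (integrable_const Lam) hqmeas (Filter.Eventually.of_forall hqb)
  have hint1 : Integrable (fun A => (inner ℝ (q A) A : ℝ)) ν := by
    refine Integrable.mono' (hmom.const_mul Lam) (hqmeas.inner hAmeas)
      (Filter.Eventually.of_forall fun A => ?_)
    calc ‖(inner ℝ (q A) A : ℝ)‖ ≤ ‖q A‖ * ‖A‖ := norm_inner_le_norm _ _
      _ ≤ Lam * ‖A‖ := mul_le_mul_of_nonneg_right (hqb A) (norm_nonneg _)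
  have hint2 : Integrable (fun A => (inner ℝ (q A) m : ℝ)) ν := by
    refine Integrable.mono' (integrable_const (Lam * ‖m‖))
      (hqmeas.inner aestronglyMeasurable_const) (Filter.Eventually.of_forall fun A => ?_)
    calc ‖(inner ℝ (q A) m : ℝ)‖ ≤ ‖q A‖ * ‖m‖ := norm_inner_le_norm _ _
      _ ≤ Lam * ‖m‖ := mul_le_mul_of_nonneg_right (hqb A) (norm_nonneg _)
  have hint3 : Integrable (fun A => (inner ℝ (p m) A : ℝ)) ν :=
    (innerSL ℝ (p m)).integrable_comp hA_int
  -- integral identities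
  have hid2 : ∫ A, (inner ℝ (q A) m : ℝ) ∂ν = inner ℝ (∫ A, q A ∂ν) m := by
    calc ∫ A, (inner ℝ (q A) m : ℝ) ∂ν = ∫ A, (inner ℝ m (q A) : ℝ) ∂ν := by
          simp_rw [real_inner_comm]
      _ = inner ℝ m (∫ A, q A ∂ν) := integral_inner hq_int m
      _ = inner ℝ (∫ A, q A ∂ν) m := real_inner_comm _ _
  have hid3 : ∫ A, (inner ℝ (p m) A : ℝ) ∂ν = inner ℝ (p m) m := integral_inner hA_int (p m)
  -- a.e. pointwise inequality
  have hae : ∀ᵐ A ∂ν,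
      (inner ℝ (q A) m : ℝ) + inner ℝ (p m) A - inner ℝ (p m) m ≤ inner ℝ (q A) A := by
    have hmem : ∀ᵐ A ∂ν, convexEnvelope Φ A = Φ A := by
      rw [ae_iff]
      convert hconc using 2
      rfl
    filter_upwards [hmem] with A hA
    have hqpA : q A = p A := hqp A hA
    have h1 := convex_grad_ineq henvconv (hp A) m
    have h2 := convex_grad_ineq henvconv (hp m) A
    rw [hqpA]
    rw [inner_sub_right] at h1 h2
    linarith
  have hadd : Integrable (fun A => (inner ℝ (q A) m : ℝ) + inner ℝ (p m) A) ν := hint2.add hint3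
  have hsub : Integrable
      (fun A => (inner ℝ (q A) m : ℝ) + inner ℝ (p m) A - inner ℝ (p m) m) ν :=
    hadd.sub (integrable_const _)
  have key : ∫ A, ((inner ℝ (q A) m : ℝ) + inner ℝ (p m) A - inner ℝ (p m) m) ∂ν ≤
      ∫ A, (inner ℝ (q A) A : ℝ) ∂ν :=
    integral_mono_ae hsub hint1 hae
  rw [integral_sub hadd (integrable_const _), integral_add hint2 hint3,
    integral_const, hid2, hid3] at key
  simp only [measure_univ, probReal_univ, ENNReal.toReal_one, one_smul, smul_eq_mul] at key
  linarith
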